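/- Agreement at infinity: for every connected network on n ≥ 1 nodes, the generalized degree of every node converges to the average degree as the parameter tends to infinity, i.e. lim_{ε → ∞} x_j(ε) = (∑_{i ∈ N} d_i) / n for every node j ∈ N. -/

import Mathlib

open Matrix Filter

/-- A network on `n` nodes: a symmetric, loopless 0-1 adjacency matrix. -/
def IsNetwork {n : ℕ} (A : Matrix (Fin n) (Fin n) ℝ) : Prop :=
  (∀ i j, A i j = A j i) ∧ (∀ i, A i i = 0) ∧ (∀ i j, A i j = 0 ∨ A i j = 1)

/-- Degree of node `i`: the `i`-th entry of `A · e`. -/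
def deg {n : ℕ} (A : Matrix (Fin n) (Fin n) ℝ) (i : Fin n) : ℝ :=
  ∑ j, A i j

/-- The Laplacian matrix of the network: `ℓ_{ii} = d_i`, `ℓ_{ij} = -a_{ij}` for `i ≠ j`. -/
def lap {n : ℕ} (A : Matrix (Fin n) (Fin n) ℝ) : Matrix (Fin n) (Fin n) ℝ :=
  Matrix.diagonal (deg A) - A

lemma quadform {n : ℕ} (A : Matrix (Fin n) (Fin n) ℝ) (hsym : ∀ i j, A i j = A j i)
    (y : Fin n → ℝ) :
    y ⬝ᵥ (lap A).mulVec y = (1/2) * ∑ i, ∑ j, A i j * (y i - y j)^2 := by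
  have hd : y ⬝ᵥ (Matrix.diagonal (deg A)).mulVec y = ∑ i, ∑ j, A i j * y i ^ 2 := by
    simp only [dotProduct, mulVec_diagonal, deg, Finset.sum_mul, Finset.mul_sum]
    refine Finset.sum_congr rfl fun i _ => Finset.sum_congr rfl fun j _ => by ring
  have ha : y ⬝ᵥ A.mulVec y = ∑ i, ∑ j, A i j * (y i * y j) := by
    simp only [dotProduct, mulVec, Finset.mul_sum]
    refine Finset.sum_congr rfl fun i _ => Finset.sum_congr rfl fun j _ => by ring
  have h1 : y ⬝ᵥ (lap A).mulVec y
      = (∑ i, ∑ j, A i j * y i ^ 2) - ∑ i, ∑ j, A i j * (y i * y j) := by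
    rw [lap, sub_mulVec, dotProduct_sub, hd, ha]
  have h2 : ∑ i, ∑ j, A i j * y j ^ 2 = ∑ i, ∑ j, A i j * y i ^ 2 := by
    rw [Finset.sum_comm]
    exact Finset.sum_congr rfl fun i _ => Finset.sum_congr rfl fun j _ => by rw [hsym]
  have h3 : ∀ i j, A i j * (y i - y j)^2
      = A i j * y i ^2 - 2 * (A i j * (y i * y j)) + A i j * y j ^2 := fun i j => by ring
  have h4 : ∑ i, ∑ j, 2 * (A i j * (y i * y j)) = 2 * ∑ i, ∑ j, A i j * (y i * y j) := by
    simp only [Finset.mul_sum]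
  simp only [h1, h3, Finset.sum_add_distrib, Finset.sum_sub_distrib, h2, h4]
  ring

lemma q_nonneg {n : ℕ} {A : Matrix (Fin n) (Fin n) ℝ} (hA : IsNetwork A) (y : Fin n → ℝ) :
    0 ≤ y ⬝ᵥ (lap A).mulVec y := by
  rw [quadform A hA.1 y]
  have : ∀ i j : Fin n, 0 ≤ A i j * (y i - y j)^2 := fun i j =>
    mul_nonneg (by rcases hA.2.2 i j with h | h <;> rw [h] <;> norm_num) (sq_nonneg _)
  exact mul_nonneg (by norm_num)
    (Finset.sum_nonneg fun i _ => Finset.sum_nonneg fun j _ => this i j)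

lemma q_const {n : ℕ} {A : Matrix (Fin n) (Fin n) ℝ} (hA : IsNetwork A)
    (hconn : ∀ i j : Fin n, Relation.ReflTransGen (fun a b => A a b = 1) i j)
    {y : Fin n → ℝ} (hq : y ⬝ᵥ (lap A).mulVec y = 0) (i j : Fin n) : y i = y j := by
  rw [quadform A hA.1 y] at hq
  have hterm : ∀ i j : Fin n, 0 ≤ A i j * (y i - y j)^2 := fun i j =>
    mul_nonneg (by rcases hA.2.2 i j with h | h <;> rw [h] <;> norm_num) (sq_nonneg _)
  have hz : ∀ a b : Fin n, A a b = 1 → y a = y b := by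
    intro a b hab
    have hsum : ∑ i, ∑ j, A i j * (y i - y j)^2 = 0 := by linarith
    have h1 : ∀ p ∈ Finset.univ, (0:ℝ) ≤ ∑ q, A p q * (y p - y q)^2 :=
      fun p _ => Finset.sum_nonneg fun q _ => hterm p q
    have h2 := (Finset.sum_eq_zero_iff_of_nonneg h1).mp hsum a (Finset.mem_univ a)
    have h3 := (Finset.sum_eq_zero_iff_of_nonneg (fun q _ => hterm a q)).mp h2 b (Finset.mem_univ b)
    rw [hab, one_mul] at h3
    have := pow_eq_zero_iff (n := 2) (by norm_num) |>.mp h3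
    linarith
  induction hconn i j with
  | refl => rfl
  | tail _ hab ih => exact ih.trans (hz _ _ hab)

lemma exists_gap {n : ℕ} {A : Matrix (Fin n) (Fin n) ℝ} (hA : IsNetwork A)
    (hconn : ∀ i j : Fin n, Relation.ReflTransGen (fun a b => A a b = 1) i j) (hn : 0 < n) :
    ∃ lam > (0:ℝ), ∀ y : Fin n → ℝ, (∑ i, y i) = 0 →
      lam * (∑ i, y i ^ 2) ≤ y ⬝ᵥ (lap A).mulVec y := by
  classical
  set Q : (Fin n → ℝ) → ℝ := fun y => y ⬝ᵥ (lap A).mulVec y with hQ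
  set K : Set (Fin n → ℝ) := {y | (∑ i, y i) = 0 ∧ (∑ i, y i ^ 2) = 1} with hK
  have hQcont : Continuous Q := by
    have : Q = fun y => ∑ i, y i * ∑ j, lap A i j * y j := by
      funext y; simp [hQ, dotProduct, mulVec]
    rw [this]
    exact continuous_finset_sum _ fun i _ => (continuous_apply i).mul
      (continuous_finset_sum _ fun j _ => continuous_const.mul (continuous_apply j))
  -- key: lower bound on K (vacuous if K empty)
  have main : ∀ lam > (0:ℝ), (∀ y ∈ K, lam ≤ Q y) →
      ∀ y : Fin n → ℝ, (∑ i, y i) = 0 → lam * (∑ i, y i ^ 2) ≤ Q y := by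
    intro lam hlam hbd y hy0
    by_cases hS : (∑ i, y i ^ 2) = 0
    · rw [hS, mul_zero]; exact q_nonneg hA y
    · have hSpos : 0 < ∑ i, y i ^ 2 :=
        lt_of_le_of_ne (Finset.sum_nonneg fun i _ => sq_nonneg _) (Ne.symm hS)
      set t := Real.sqrt (∑ i, y i ^ 2) with ht
      have htpos : 0 < t := Real.sqrt_pos.mpr hSpos
      have ht2 : t ^ 2 = ∑ i, y i ^ 2 := Real.sq_sqrt hSpos.le
      have hz : (t⁻¹ • y) ∈ K := by
        constructor
        · simp [Pi.smul_apply, smul_eq_mul, ← Finset.mul_sum, hy0]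
        · simp only [Pi.smul_apply, smul_eq_mul, mul_pow, ← Finset.mul_sum]
          rw [← ht2]; field_simp
      have hQz : Q (t⁻¹ • y) = (t⁻¹)^2 * Q y := by
        simp only [hQ, Matrix.mulVec_smul, smul_dotProduct, dotProduct_smul, smul_eq_mul]
        ring
      have := hbd _ hz
      rw [hQz] at this
      have h2 : lam * t^2 ≤ Q y := by
        rw [← ht2] at *
        calc lam * t^2 ≤ ((t⁻¹)^2 * Q y) * t^2 := by nlinarith
          _ = Q y := by field_simp
      rw [← ht2]; exact h2
  by_cases hne : K.Nonempty
  · have hKc : IsCompact K := by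
      have hclosed : IsClosed K := by
        have h1 : IsClosed {y : Fin n → ℝ | (∑ i, y i) = 0} :=
          isClosed_eq (continuous_finset_sum _ fun i _ => continuous_apply i) continuous_const
        have h2 : IsClosed {y : Fin n → ℝ | (∑ i, y i ^ 2) = 1} :=
          isClosed_eq (continuous_finset_sum _ fun i _ => (continuous_apply i).pow 2)
            continuous_const
        exact h1.inter h2
      have hbdd : Bornology.IsBounded K := by
        apply Bornology.IsBounded.subset (Metric.isBounded_closedBall (x := (0 : Fin n → ℝ)) (r := 1))
        intro y hy
        rw [Metric.mem_closedBall, dist_zero_right]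
        refine (pi_norm_le_iff_of_nonneg zero_le_one).mpr fun i => ?_
        rw [Real.norm_eq_abs, ← Real.sqrt_one, ← Real.sqrt_sq_eq_abs]
        apply Real.sqrt_le_sqrt
        rw [← hy.2]
        exact Finset.single_le_sum (fun i _ => sq_nonneg (y i)) (Finset.mem_univ i)
      exact Metric.isCompact_of_isClosed_isBounded hclosed hbdd
    obtain ⟨y₀, hy₀K, hmin⟩ := hKc.exists_isMinOn hne hQcont.continuousOn
    refine ⟨Q y₀, ?_, fun y hy => main (Q y₀) ?_ (fun z hz => hmin hz) y hy⟩
    · rcases lt_or_eq_of_le (q_nonneg hA y₀) with h | h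
      · exact h
      · exfalso
        have hconst := q_const hA hconn h.symm
        have : ∀ i : Fin n, y₀ i = 0 := by
          intro i
          have hsum : ∑ j, y₀ j = 0 := hy₀K.1
          have : ∑ j : Fin n, y₀ j = n * y₀ i := by
            rw [Finset.sum_congr rfl fun j _ => hconst j i]
            simp [Finset.card_univ]
          have hni : (n:ℝ) * y₀ i = 0 := by rw [← this, hsum]
          rcases mul_eq_zero.mp hni with h' | h'
          · exact absurd h' (Nat.cast_ne_zero.mpr hn.ne')
          · exact h'
        have : ∑ i, y₀ i ^ 2 = 0 := Finset.sum_eq_zero fun i _ => by rw [this i]; ring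
        rw [hy₀K.2] at this; norm_num at this
    · rcases lt_or_eq_of_le (q_nonneg hA y₀) with h | h
      · exact h
      · exfalso
        have hconst := q_const hA hconn h.symm
        have hz : ∀ i : Fin n, y₀ i = 0 := by
          intro i
          have hsum : ∑ j, y₀ j = 0 := hy₀K.1
          have : ∑ j : Fin n, y₀ j = n * y₀ i := by
            rw [Finset.sum_congr rfl fun j _ => hconst j i]
            simp [Finset.card_univ]
          have hni : (n:ℝ) * y₀ i = 0 := by rw [← this, hsum]
          rcases mul_eq_zero.mp hni with h' | h'
          · exact absurd h' (Nat.cast_ne_zero.mpr hn.ne')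
          · exact h'
        have : ∑ i, y₀ i ^ 2 = 0 := Finset.sum_eq_zero fun i _ => by rw [hz i]; ring
        rw [hy₀K.2] at this; norm_num at this
  · refine ⟨1, one_pos, main 1 one_pos fun y hy => absurd ⟨y, hy⟩ hne⟩

/-- Agreement at infinity: in a connected network, the generalized degree of every node
tends to the average degree as `ε → ∞`. -/
theorem generalizedDegree_agreement_at_infinity
    {n : ℕ} (hn : 0 < n) (A : Matrix (Fin n) (Fin n) ℝ) (hA : IsNetwork A)
    (hconn : ∀ i j : Fin n, Relation.ReflTransGen (fun a b => A a b = 1) i j)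
    (X : ℝ → Fin n → ℝ)
    (hX : ∀ ε : ℝ, 0 < ε →
      ((1 : Matrix (Fin n) (Fin n) ℝ) + ε • lap A).mulVec (X ε) = deg A) :
    ∀ j : Fin n,
      Filter.Tendsto (fun ε => X ε j) Filter.atTop (nhds ((∑ i, deg A i) / n)) := by
  intro j
  obtain ⟨lam, hlam, hgap⟩ := exists_gap hA hconn hn
  set c : ℝ := (∑ i, deg A i) / n with hc
  set b : Fin n → ℝ := fun i => deg A i - c with hb
  set nb : ℝ := Real.sqrt (∑ i, b i ^ 2) with hnb
  have hnbnn : 0 ≤ nb := Real.sqrt_nonneg _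
  have hbsum : ∑ i, b i = 0 := by
    simp only [hb, Finset.sum_sub_distrib, Finset.sum_const, Finset.card_univ,
      Fintype.card_fin, nsmul_eq_mul, hc]
    field_simp
    ring
  have hLrow : ∀ i, ∑ k, lap A i k = 0 := by
    intro i
    simp only [lap, Matrix.sub_apply, Finset.sum_sub_distrib, deg]
    rw [Finset.sum_eq_single i (fun k _ hk => Matrix.diagonal_apply_ne _ (Ne.symm hk))
      (fun h => absurd (Finset.mem_univ i) h)]
    simp [deg]
  have hlapsym : ∀ i k, lap A i k = lap A k i := by
    intro i k
    by_cases h : i = k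
    · rw [h]
    · simp [lap, Matrix.diagonal_apply_ne _ h, Matrix.diagonal_apply_ne _ (Ne.symm h), hA.1 i k]
  have hLcol : ∀ k, ∑ i, lap A i k = 0 := by
    intro k
    rw [Finset.sum_congr rfl fun i _ => hlapsym i k]
    exact hLrow k
  -- the key pointwise bound
  have hbound : ∀ ε : ℝ, 0 < ε → |X ε j - c| ≤ nb / (1 + ε * lam) := by
    intro ε hε
    have hden : (0:ℝ) < 1 + ε * lam := by positivity
    set y : Fin n → ℝ := fun i => X ε i - c with hy
    have hXeq : ∀ i, X ε i + ε * ((lap A).mulVec (X ε)) i = deg A i := by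
      intro i
      have := congrFun (hX ε hε) i
      rw [Matrix.add_mulVec, Matrix.one_mulVec, Matrix.smul_mulVec] at this
      simpa using this
    have hmv : ∀ i, ((lap A).mulVec y) i = ((lap A).mulVec (X ε)) i := by
      intro i
      simp only [mulVec, dotProduct, hy, mul_sub, Finset.sum_sub_distrib, ← Finset.sum_mul,
        hLrow i, zero_mul, sub_zero]
    have hEq : ∀ i, y i + ε * ((lap A).mulVec y) i = b i := by
      intro i
      rw [hmv i]
      simp only [hy, hb]
      have := hXeq i
      ring_nf
      ring_nf at this
      linarith
    have hy0 : ∑ i, y i = 0 := by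
      have h1 : ∑ i, (y i + ε * ((lap A).mulVec y) i) = ∑ i, b i :=
        Finset.sum_congr rfl fun i _ => hEq i
      have h2 : ∑ i, ((lap A).mulVec y) i = 0 := by
        simp only [mulVec, dotProduct]
        rw [Finset.sum_comm]
        simp only [← Finset.sum_mul, hLcol, zero_mul, Finset.sum_const_zero]
      rw [Finset.sum_add_distrib, ← Finset.mul_sum, h2, mul_zero, add_zero, hbsum] at h1
      exact h1
    set S : ℝ := ∑ i, y i ^ 2 with hS
    have hSnn : 0 ≤ S := Finset.sum_nonneg fun i _ => sq_nonneg _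
    have hdot : S + ε * (y ⬝ᵥ (lap A).mulVec y) = ∑ i, y i * b i := by
      rw [Finset.sum_congr rfl fun i _ => by rw [← hEq i]]
      simp only [dotProduct, mul_add, Finset.sum_add_distrib, hS, Finset.mul_sum]
      congr 1
      · exact Finset.sum_congr rfl fun i _ => by ring
      · exact Finset.sum_congr rfl fun i _ => by ring
    have hcs : ∑ i, y i * b i ≤ Real.sqrt S * nb := Real.sum_mul_le_sqrt_mul_sqrt _ y b
    have hqg := hgap y hy0
    have hkey : (1 + ε * lam) * S ≤ Real.sqrt S * nb := by nlinarith
    have hyj : |y j| ≤ Real.sqrt S := by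
      rw [← Real.sqrt_sq_eq_abs]
      exact Real.sqrt_le_sqrt (Finset.single_le_sum (fun i _ => sq_nonneg (y i))
        (Finset.mem_univ j))
    have hfin : |y j| ≤ nb / (1 + ε * lam) := by
      rcases eq_or_lt_of_le (Real.sqrt_nonneg S) with h0 | h0
      · rw [le_div_iff₀ hden]
        nlinarith
      · have ht2 : Real.sqrt S ^ 2 = S := Real.sq_sqrt hSnn
        have h1 : (1 + ε * lam) * Real.sqrt S ≤ nb := by nlinarith
        rw [le_div_iff₀ hden]
        nlinarith
    simpa [hy] using hfin
  have hg0 : Tendsto (fun ε : ℝ => nb / (1 + ε * lam)) atTop (nhds 0) := by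
    apply Tendsto.div_atTop tendsto_const_nhds
    apply tendsto_atTop_add_const_left
    exact Tendsto.atTop_mul_const hlam tendsto_id
  have hmain : Tendsto (fun ε => X ε j - c) atTop (nhds 0) := by
    apply squeeze_zero_norm' _ hg0
    filter_upwards [eventually_gt_atTop 0] with ε hε
    rw [Real.norm_eq_abs]
    exact hbound ε hε
  have := hmain.add_const c
  simpa using this
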